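/- The second derivative of the logistic loss φ(t) = log(1 + exp(t)) is Lipschitz continuous with constant 1/(6√3), i.e., |φ''(t) - φ''(s)| ≤ (1/(6√3))|t - s| for all real t, s. -/

import Mathlib

open Real

lemma pos1 (x : ℝ) : (0:ℝ) < 1 + Real.exp x := by positivity

lemma hd1 (x : ℝ) : HasDerivAt (fun t : ℝ => Real.log (1 + Real.exp t))
    (Real.exp x / (1 + Real.exp x)) x := by
  have h : HasDerivAt (fun t : ℝ => 1 + Real.exp t) (Real.exp x) x :=
    (Real.hasDerivAt_exp x).const_add 1
  simpa using h.log (pos1 x).ne'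

lemma hd2 (x : ℝ) : HasDerivAt (fun t : ℝ => Real.exp t / (1 + Real.exp t))
    (Real.exp x / (1 + Real.exp x) ^ 2) x := by
  have h : HasDerivAt (fun t : ℝ => 1 + Real.exp t) (Real.exp x) x :=
    (Real.hasDerivAt_exp x).const_add 1
  have := (Real.hasDerivAt_exp x).div h (pos1 x).ne'
  refine this.congr_deriv ?_
  rw [div_eq_div_iff (by positivity) (by positivity)]
  ring

lemma hd3 (x : ℝ) : HasDerivAt (fun t : ℝ => Real.exp t / (1 + Real.exp t) ^ 2)
    (Real.exp x * (1 - Real.exp x) / (1 + Real.exp x) ^ 3) x := by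
  have h : HasDerivAt (fun t : ℝ => (1 + Real.exp t) ^ 2)
      (2 * (1 + Real.exp x) * Real.exp x) x := by
    have h0 : HasDerivAt (fun t : ℝ => 1 + Real.exp t) (Real.exp x) x :=
      (Real.hasDerivAt_exp x).const_add 1
    refine (h0.pow 2).congr_deriv ?_
    ring
  have hne : ((1 + Real.exp x) ^ 2) ≠ 0 := by positivity
  have := (Real.hasDerivAt_exp x).div h hne
  refine this.congr_deriv ?_
  have h1 : (1 + Real.exp x) ≠ 0 := (pos1 x).ne'
  rw [div_eq_div_iff (by positivity) (by positivity)]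
  ring

lemma iter2 (x : ℝ) : iteratedDeriv 2 (fun t : ℝ => Real.log (1 + Real.exp t)) x
    = Real.exp x / (1 + Real.exp x) ^ 2 := by
  rw [iteratedDeriv_succ, iteratedDeriv_one]
  have hd : deriv (fun t : ℝ => Real.log (1 + Real.exp t))
      = fun t : ℝ => Real.exp t / (1 + Real.exp t) := by
    funext y; exact (hd1 y).deriv
  rw [hd]
  exact (hd2 x).deriv

lemma bound3 (x : ℝ) : |Real.exp x * (1 - Real.exp x) / (1 + Real.exp x) ^ 3|
    ≤ 1 / (6 * Real.sqrt 3) := by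
  set a := Real.exp x with ha
  have hapos : 0 < a := Real.exp_pos x
  have hs : Real.sqrt 3 > 0 := Real.sqrt_pos.mpr (by norm_num)
  have hs2 : Real.sqrt 3 ^ 2 = 3 := Real.sq_sqrt (by norm_num)
  have h108 : (a * (1 - a) / (1 + a) ^ 3) ^ 2 ≤ (1 / (6 * Real.sqrt 3)) ^ 2 := by
    have hc : (1 / (6 * Real.sqrt 3)) ^ 2 = 1 / 108 := by
      rw [div_pow, mul_pow, hs2]; norm_num
    rw [hc, div_pow, div_le_div_iff₀ (by positivity) (by norm_num)]
    nlinarith [mul_nonneg (sq_nonneg (a^2 - 4*a + 1)) (by nlinarith : (0:ℝ) ≤ a^2 + 14*a + 1)]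
  have := Real.sqrt_le_sqrt h108
  rwa [Real.sqrt_sq_eq_abs, Real.sqrt_sq (by positivity)] at this

theorem logistic_second_deriv_lipschitz (t s : ℝ) :
    |iteratedDeriv 2 (fun t : ℝ => Real.log (1 + Real.exp t)) t -
      iteratedDeriv 2 (fun t : ℝ => Real.log (1 + Real.exp t)) s| ≤
      (1 / (6 * Real.sqrt 3)) * |t - s| := by
  have key : ∀ x : ℝ, iteratedDeriv 2 (fun t : ℝ => Real.log (1 + Real.exp t)) x
      = Real.exp x / (1 + Real.exp x) ^ 2 := iter2
  rw [key t, key s]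
  have h := Convex.norm_image_sub_le_of_norm_hasDerivWithin_le
    (f := fun t : ℝ => Real.exp t / (1 + Real.exp t) ^ 2)
    (f' := fun x : ℝ => Real.exp x * (1 - Real.exp x) / (1 + Real.exp x) ^ 3)
    (C := 1 / (6 * Real.sqrt 3))
    (fun x _ => (hd3 x).hasDerivWithinAt)
    (fun x _ => by rw [Real.norm_eq_abs]; exact bound3 x)
    convex_univ (Set.mem_univ s) (Set.mem_univ t)
  simpa only [Real.norm_eq_abs] using h
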